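/- For every a : ZMod d × ZMod d → ℂ with Σ_{r,s} |a_{r,s}|² = 1, the double-Bell vector Ψ_a has unit norm, and the partial trace over the fourth factor of its outer product recovers P_a: for all (i,j,k), (i',j',k') ∈ (ZMod d)³, d · Σ_{l} Ψ_a(i,j,k,l) · conj(Ψ_a(i',j',k',l)) = (P_a)_{(i,j,k),(i',j',k')}. -/

import Mathlib

open Matrix Kronecker BigOperators

/-- ω = exp(2πi/d). -/
noncomputable def omega (d : ℕ) : ℂ := Complex.exp (2 * Real.pi * Complex.I / d)

/-- The Weyl–Heisenberg matrix `U_{p,q}`. -/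
noncomputable def WH (d : ℕ) [NeZero d] (p q : ZMod d) : Matrix (ZMod d) (ZMod d) ℂ :=
  fun j k => if j = k + p then omega d ^ (q.val * k.val) else 0

/-- The operator `P_a` on `(ℂ^d)^⊗3` associated to the coefficients `a`:
`(P_a)_{(i,j,k),(i',j',k')} = (1/d) Σ_{r,s,r',s'} a_{rs} conj(a_{r's'})
  (U_{rs}ᴴ U_{r's'})_{i,i'} (U_{rs})_{j,k} conj((U_{r's'})_{j',k'})`. -/
noncomputable def Pa (d : ℕ) [NeZero d] (a : ZMod d × ZMod d → ℂ) :
    Matrix (ZMod d × ZMod d × ZMod d) (ZMod d × ZMod d × ZMod d) ℂ :=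
  fun x y => (d : ℂ)⁻¹ * ∑ r : ZMod d, ∑ s : ZMod d, ∑ r' : ZMod d, ∑ s' : ZMod d,
    a (r, s) * (starRingEnd ℂ) (a (r', s')) * ((WH d r s)ᴴ * WH d r' s') x.1 y.1 *
      WH d r s x.2.1 x.2.2 * (starRingEnd ℂ) (WH d r' s' y.2.1 y.2.2)

/-- The double-Bell vector `Ψ_a(i,j,k,l) = (1/d) Σ_{r,s} a_{rs} (U_{rs}ᴴ)_{i,l} (U_{rs})_{j,k}`. -/
noncomputable def PsiA (d : ℕ) [NeZero d] (a : ZMod d × ZMod d → ℂ) :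
    ZMod d × ZMod d × ZMod d × ZMod d → ℂ :=
  fun x => (d : ℂ)⁻¹ * ∑ r : ZMod d, ∑ s : ZMod d,
    a (r, s) * (WH d r s)ᴴ x.1 x.2.2.2 * WH d r s x.2.1 x.2.2.1

/- ### Auxiliary lemmas -/

lemma omega_prim (d : ℕ) [NeZero d] : IsPrimitiveRoot (omega d) d :=
  Complex.isPrimitiveRoot_exp d (NeZero.ne d)

lemma omega_ne_zero (d : ℕ) [NeZero d] : omega d ≠ 0 := Complex.exp_ne_zero _

lemma omega_conj_mul (d : ℕ) [NeZero d] : (starRingEnd ℂ) (omega d) * omega d = 1 := by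
  rw [omega, ← Complex.exp_conj, ← Complex.exp_add]
  rw [show (starRingEnd ℂ) (2 * Real.pi * Complex.I / d) + 2 * Real.pi * Complex.I / d = 0 by
    simp [map_div₀, map_ofNat, Complex.conj_I]; ring]
  exact Complex.exp_zero

lemma omega_conj (d : ℕ) [NeZero d] : (starRingEnd ℂ) (omega d) = (omega d)⁻¹ :=
  eq_inv_of_mul_eq_one_left (omega_conj_mul d)

lemma sum_zmod_pow (d : ℕ) [NeZero d] (ζ : ℂ) :
    ∑ k : ZMod d, ζ ^ (k.val) = ∑ i ∈ Finset.range d, ζ ^ i := by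
  refine Finset.sum_nbij' (fun k => k.val) (fun i => (i : ZMod d)) ?_ ?_ ?_ ?_ ?_ <;>
    intro x hx
  · exact Finset.mem_range.mpr (ZMod.val_lt x)
  · exact Finset.mem_univ _
  · simp [ZMod.natCast_val, ZMod.cast_id]
  · exact ZMod.val_cast_of_lt (Finset.mem_range.mp hx)
  · rfl

lemma char_sum (d : ℕ) [NeZero d] (s s' : ZMod d) :
    ∑ x : ZMod d, (starRingEnd ℂ) (omega d ^ (s.val * x.val)) * omega d ^ (s'.val * x.val)
      = if s = s' then (d : ℂ) else 0 := by
  set ζ : ℂ := ((omega d) ^ s.val)⁻¹ * omega d ^ s'.val with hζ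
  have hterm : ∀ x : ZMod d,
      (starRingEnd ℂ) (omega d ^ (s.val * x.val)) * omega d ^ (s'.val * x.val) = ζ ^ x.val := by
    intro x
    rw [map_pow, omega_conj, pow_mul, pow_mul, ← mul_pow, inv_pow]
  rw [Finset.sum_congr rfl (fun x _ => hterm x), sum_zmod_pow]
  have hzeta : ζ = omega d ^ ((s'.val : ℤ) - (s.val : ℤ)) := by
    rw [sub_eq_add_neg, zpow_add₀ (omega_ne_zero d), zpow_natCast, _root_.zpow_neg,
      zpow_natCast, mul_comm]
  by_cases h : s = s'
  · subst h
    simp [hζ, inv_mul_cancel₀ (pow_ne_zero _ (omega_ne_zero d))]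
  · rw [if_neg h]
    have hζ1 : ζ ≠ 1 := by
      intro h1
      rw [hzeta] at h1
      have hdvd := ((omega_prim d).zpow_eq_one_iff_dvd _).mp h1
      have hv : (s'.val : ℤ) - (s.val : ℤ) = 0 := by
        refine Int.eq_zero_of_abs_lt_dvd hdvd ?_
        have h1 : (s'.val : ℤ) < d := by exact_mod_cast ZMod.val_lt s'
        have h2 : (s.val : ℤ) < d := by exact_mod_cast ZMod.val_lt s
        have h3 : (0:ℤ) ≤ s'.val := by positivity
        have h4 : (0:ℤ) ≤ s.val := by positivity
        rw [abs_sub_lt_iff]; omega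
      have : s'.val = s.val := by omega
      exact h (ZMod.val_injective _ this).symm
    have hζd : ζ ^ d = 1 := by
      rw [hzeta, ← zpow_natCast, ← _root_.zpow_mul, mul_comm, _root_.zpow_mul, zpow_natCast,
        (omega_prim d).pow_eq_one, _root_.one_zpow]
    rw [geom_sum_eq hζ1, hζd, sub_self, zero_div]

lemma WH_entry (d : ℕ) [NeZero d] (r s r' s' : ZMod d) (x : ZMod d) :
    ((WH d r s)ᴴ * WH d r' s') x x
      = if r = r' then (starRingEnd ℂ) (omega d ^ (s.val * x.val)) * omega d ^ (s'.val * x.val)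
        else 0 := by
  rw [Matrix.mul_apply]
  simp only [Matrix.conjTranspose_apply, WH, apply_ite (star : ℂ → ℂ), star_zero, ite_mul,
    zero_mul, mul_ite, mul_zero, Finset.sum_ite_eq', Finset.mem_univ, if_true, add_right_inj]
  simp only [eq_comm (a := r')]
  rfl

lemma WH_trace (d : ℕ) [NeZero d] (r s r' s' : ZMod d) :
    ∑ x : ZMod d, ((WH d r s)ᴴ * WH d r' s') x x = if r = r' ∧ s = s' then (d : ℂ) else 0 := by
  rw [Finset.sum_congr rfl (fun x _ => WH_entry d r s r' s' x)]
  by_cases hr : r = r'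
  · simp only [hr, if_true, eq_self_iff_true, true_and]
    rw [char_sum]
  · simp [hr]

lemma WH_sum2 (d : ℕ) [NeZero d] (r s r' s' : ZMod d) :
    ∑ j : ZMod d, ∑ k : ZMod d, WH d r s j k * (starRingEnd ℂ) (WH d r' s' j k)
      = if r = r' ∧ s = s' then (d : ℂ) else 0 := by
  rw [Finset.sum_comm]
  calc ∑ k : ZMod d, ∑ j : ZMod d, WH d r s j k * (starRingEnd ℂ) (WH d r' s' j k)
      = ∑ k : ZMod d, ((WH d r' s')ᴴ * WH d r s) k k := by
        refine Finset.sum_congr rfl fun k _ => ?_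
        rw [Matrix.mul_apply]
        refine (Finset.sum_congr rfl fun j _ => ?_).symm
        rw [Matrix.conjTranspose_apply, mul_comm]
        rfl
    _ = if r' = r ∧ s' = s then (d : ℂ) else 0 := WH_trace d r' s' r s
    _ = if r = r' ∧ s = s' then (d : ℂ) else 0 :=
        if_congr ⟨fun ⟨h1, h2⟩ => ⟨h1.symm, h2.symm⟩, fun ⟨h1, h2⟩ => ⟨h1.symm, h2.symm⟩⟩ rfl rfl

lemma sc2 {α : Type*} [Fintype α] (f : α → α → α → ℂ) :
    (∑ a : α, ∑ b : α, ∑ c : α, f a b c) = ∑ a : α, ∑ c : α, ∑ b : α, f a b c :=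
  Finset.sum_congr rfl fun _ _ => Finset.sum_comm

lemma sc3 {α : Type*} [Fintype α] (f : α → α → α → α → ℂ) :
    (∑ a : α, ∑ b : α, ∑ c : α, ∑ e : α, f a b c e)
      = ∑ a : α, ∑ b : α, ∑ e : α, ∑ c : α, f a b c e :=
  Finset.sum_congr rfl fun a _ => sc2 (f a)

lemma sc4 {α : Type*} [Fintype α] (f : α → α → α → α → α → ℂ) :
    (∑ a : α, ∑ b : α, ∑ c : α, ∑ e : α, ∑ g : α, f a b c e g)
      = ∑ a : α, ∑ b : α, ∑ c : α, ∑ g : α, ∑ e : α, f a b c e g :=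
  Finset.sum_congr rfl fun a _ => sc3 (f a)

lemma sc5 {α : Type*} [Fintype α] (f : α → α → α → α → α → α → ℂ) :
    (∑ a : α, ∑ b : α, ∑ c : α, ∑ e : α, ∑ g : α, ∑ h : α, f a b c e g h)
      = ∑ a : α, ∑ b : α, ∑ c : α, ∑ e : α, ∑ h : α, ∑ g : α, f a b c e g h :=
  Finset.sum_congr rfl fun a _ => sc4 (f a)

lemma sc6 {α : Type*} [Fintype α] (f : α → α → α → α → α → α → α → ℂ) :
    (∑ a : α, ∑ b : α, ∑ c : α, ∑ e : α, ∑ g : α, ∑ h : α, ∑ m : α, f a b c e g h m)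
      = ∑ a : α, ∑ b : α, ∑ c : α, ∑ e : α, ∑ g : α, ∑ m : α, ∑ h : α, f a b c e g h m :=
  Finset.sum_congr rfl fun a _ => sc5 (f a)

lemma swap5 {α : Type*} [Fintype α] (f g : α → α → α → ℂ) :
    ∑ l : α, (∑ r : α, ∑ s : α, f r s l) * (∑ r' : α, ∑ s' : α, g r' s' l)
      = ∑ r : α, ∑ s : α, ∑ r' : α, ∑ s' : α, ∑ l : α, f r s l * g r' s' l := by
  simp only [Finset.sum_mul, Finset.mul_sum]
  rw [Finset.sum_comm, sc2, sc3, sc4, sc2, Finset.sum_comm, sc3, sc2]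

/-- swap ijk-outer/ rsr's'-inner -/
lemma swap7 {α : Type*} [Fintype α] (t : α → α → α → α → α → α → α → ℂ) :
    (∑ i : α, ∑ j : α, ∑ k : α, ∑ r : α, ∑ s : α, ∑ r' : α, ∑ s' : α, t i j k r s r' s')
      = ∑ r : α, ∑ s : α, ∑ r' : α, ∑ s' : α, ∑ i : α, ∑ j : α, ∑ k : α, t i j k r s r' s' := by
  rw [sc3, sc2, Finset.sum_comm, sc4, sc3, sc2, sc5, sc4, sc3, sc6, sc5, sc4]

lemma factor3 {α : Type*} [Fintype α] (A : ℂ) (M : α → ℂ) (N P : α → α → ℂ) :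
    (∑ i : α, ∑ j : α, ∑ k : α, A * M i * N j k * P j k)
      = A * (∑ i : α, M i) * (∑ j : α, ∑ k : α, N j k * P j k) := by
  simp only [Finset.sum_mul, Finset.mul_sum]
  rw [Finset.sum_comm, sc2]
  refine Finset.sum_congr rfl fun x _ => Finset.sum_congr rfl fun y _ =>
    Finset.sum_congr rfl fun z _ => by ring

lemma pt (d : ℕ) [NeZero d] (a : ZMod d × ZMod d → ℂ) (i j k i' j' k' : ZMod d) :
    (d : ℂ) * ∑ l : ZMod d, PsiA d a (i, j, k, l) * (starRingEnd ℂ) (PsiA d a (i', j', k', l)) =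
      Pa d a (i, j, k) (i', j', k') := by
  have hd : (d : ℂ) ≠ 0 := Nat.cast_ne_zero.mpr (NeZero.ne d)
  set f : ZMod d → ZMod d → ZMod d → ℂ :=
    fun r s l => a (r, s) * (WH d r s)ᴴ i l * WH d r s j k with hf
  set g : ZMod d → ZMod d → ZMod d → ℂ :=
    fun r' s' l => (starRingEnd ℂ) (a (r', s')) * WH d r' s' l i' *
      (starRingEnd ℂ) (WH d r' s' j' k') with hg
  have hpsi : ∀ l, PsiA d a (i, j, k, l) = (d : ℂ)⁻¹ * ∑ r, ∑ s, f r s l := fun l => rfl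
  have hpsi' : ∀ l, (starRingEnd ℂ) (PsiA d a (i', j', k', l))
      = (d : ℂ)⁻¹ * ∑ r', ∑ s', g r' s' l := by
    intro l
    simp only [PsiA, _root_.map_mul, map_sum, map_inv₀, Complex.conj_natCast, hg]
    congr 1
    refine Finset.sum_congr rfl fun r' _ => Finset.sum_congr rfl fun s' _ => ?_
    rw [Matrix.conjTranspose_apply]
    simp only [starRingEnd_apply, star_star]
  calc (d : ℂ) * ∑ l : ZMod d, PsiA d a (i, j, k, l) * (starRingEnd ℂ) (PsiA d a (i', j', k', l))
      = (d : ℂ) * ∑ l : ZMod d,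
          ((d : ℂ)⁻¹ * ∑ r, ∑ s, f r s l) * ((d : ℂ)⁻¹ * ∑ r', ∑ s', g r' s' l) := by
        refine congrArg _ (Finset.sum_congr rfl fun l _ => ?_)
        rw [hpsi, hpsi']
    _ = (d : ℂ)⁻¹ * ∑ l : ZMod d, (∑ r, ∑ s, f r s l) * (∑ r', ∑ s', g r' s' l) := by
        rw [Finset.mul_sum, Finset.mul_sum]
        refine Finset.sum_congr rfl fun l _ => ?_
        field_simp
    _ = (d : ℂ)⁻¹ * ∑ r, ∑ s, ∑ r', ∑ s', ∑ l, f r s l * g r' s' l := by rw [swap5]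
    _ = Pa d a (i, j, k) (i', j', k') := by
        simp only [Pa]
        congr 1
        refine Finset.sum_congr rfl fun r _ => Finset.sum_congr rfl fun s _ =>
          Finset.sum_congr rfl fun r' _ => Finset.sum_congr rfl fun s' _ => ?_
        rw [Matrix.mul_apply, Finset.mul_sum, Finset.sum_mul, Finset.sum_mul]
        refine Finset.sum_congr rfl fun l _ => ?_
        simp only [hf, hg]
        ring

/-- For normalized `a`, the double-Bell vector `Ψ_a` is a unit vector and the partial trace
over the fourth factor of `|Ψ_a⟩⟨Ψ_a|` (times d) recovers `P_a`. -/
theorem PsiA_unit_and_partial_trace (d : ℕ) [NeZero d] (a : ZMod d × ZMod d → ℂ)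
    (ha : ∑ rs : ZMod d × ZMod d, ‖a rs‖ ^ 2 = 1) :
    (∑ x : ZMod d × ZMod d × ZMod d × ZMod d, ‖PsiA d a x‖ ^ 2 = 1) ∧
    (∀ i j k i' j' k' : ZMod d,
      (d : ℂ) * ∑ l : ZMod d, PsiA d a (i, j, k, l) * (starRingEnd ℂ) (PsiA d a (i', j', k', l)) =
        Pa d a (i, j, k) (i', j', k')) := by
  have hd : (d : ℂ) ≠ 0 := Nat.cast_ne_zero.mpr (NeZero.ne d)
  refine ⟨?_, fun i j k i' j' k' => pt d a i j k i' j' k'⟩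
  -- the complex norm identity
  have hnorm : ∑ r : ZMod d, ∑ s : ZMod d, a (r, s) * (starRingEnd ℂ) (a (r, s)) = 1 := by
    rw [Fintype.sum_prod_type] at ha
    have h2 : ∑ r : ZMod d, ∑ s : ZMod d, a (r, s) * (starRingEnd ℂ) (a (r, s))
        = ((∑ r : ZMod d, ∑ s : ZMod d, ‖a (r, s)‖ ^ 2 : ℝ) : ℂ) := by
      rw [Complex.ofReal_sum]
      refine Finset.sum_congr rfl fun r _ => ?_
      rw [Complex.ofReal_sum]
      refine Finset.sum_congr rfl fun s _ => ?_
      rw [Complex.mul_conj, Complex.sq_norm]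
    rw [h2, ha, Complex.ofReal_one]
  -- trace of Pa over the diagonal
  have hPa : ∑ i : ZMod d, ∑ j : ZMod d, ∑ k : ZMod d, Pa d a (i, j, k) (i, j, k) = (d : ℂ) := by
    have step1 : ∑ i : ZMod d, ∑ j : ZMod d, ∑ k : ZMod d, Pa d a (i, j, k) (i, j, k)
        = (d : ℂ)⁻¹ * ∑ i : ZMod d, ∑ j : ZMod d, ∑ k : ZMod d,
            ∑ r, ∑ s, ∑ r', ∑ s',
              a (r, s) * (starRingEnd ℂ) (a (r', s')) * ((WH d r s)ᴴ * WH d r' s') i i *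
                WH d r s j k * (starRingEnd ℂ) (WH d r' s' j k) := by
      simp only [Pa, Finset.mul_sum]
    rw [step1, swap7]
    have step2 : ∀ r s r' s' : ZMod d,
        (∑ i : ZMod d, ∑ j : ZMod d, ∑ k : ZMod d,
          a (r, s) * (starRingEnd ℂ) (a (r', s')) * ((WH d r s)ᴴ * WH d r' s') i i *
            WH d r s j k * (starRingEnd ℂ) (WH d r' s' j k))
        = a (r, s) * (starRingEnd ℂ) (a (r', s')) *
            (if r = r' ∧ s = s' then (d : ℂ) else 0) *
            (if r = r' ∧ s = s' then (d : ℂ) else 0) := by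
      intro r s r' s'
      rw [show (∑ i : ZMod d, ∑ j : ZMod d, ∑ k : ZMod d,
          a (r, s) * (starRingEnd ℂ) (a (r', s')) * ((WH d r s)ᴴ * WH d r' s') i i *
            WH d r s j k * (starRingEnd ℂ) (WH d r' s' j k))
        = (a (r, s) * (starRingEnd ℂ) (a (r', s'))) *
            (∑ i : ZMod d, ((WH d r s)ᴴ * WH d r' s') i i) *
            (∑ j : ZMod d, ∑ k : ZMod d, WH d r s j k * (starRingEnd ℂ) (WH d r' s' j k))
        from factor3 _ _ _ _, WH_trace, WH_sum2]
    rw [Finset.sum_congr rfl fun r _ => Finset.sum_congr rfl fun s _ =>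
      Finset.sum_congr rfl fun r' _ => Finset.sum_congr rfl fun s' _ => step2 r s r' s']
    have step3 : ∀ r s : ZMod d,
        (∑ r' : ZMod d, ∑ s' : ZMod d,
          a (r, s) * (starRingEnd ℂ) (a (r', s')) *
            (if r = r' ∧ s = s' then (d : ℂ) else 0) *
            (if r = r' ∧ s = s' then (d : ℂ) else 0))
        = a (r, s) * (starRingEnd ℂ) (a (r, s)) * (d : ℂ) * (d : ℂ) := by
      intro r s
      rw [Finset.sum_eq_single r]
      · rw [Finset.sum_eq_single s]
        · simp
        · intro s' _ hs'
          simp [Ne.symm hs']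
        · intro h; exact absurd (Finset.mem_univ s) h
      · intro r' _ hr'
        apply Finset.sum_eq_zero
        intro s' _
        simp [Ne.symm hr']
      · intro h; exact absurd (Finset.mem_univ r) h
    rw [Finset.sum_congr rfl fun r _ => Finset.sum_congr rfl fun s _ => step3 r s]
    have : ∑ r : ZMod d, ∑ s : ZMod d,
        a (r, s) * (starRingEnd ℂ) (a (r, s)) * (d : ℂ) * (d : ℂ)
        = (∑ r : ZMod d, ∑ s : ZMod d, a (r, s) * (starRingEnd ℂ) (a (r, s))) * (d : ℂ) * (d : ℂ) := by
      simp only [Finset.sum_mul]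
    rw [this, hnorm, one_mul]
    field_simp
  -- assemble
  have hsum : ∑ x : ZMod d × ZMod d × ZMod d × ZMod d,
      PsiA d a x * (starRingEnd ℂ) (PsiA d a x) = 1 := by
    have split : ∑ x : ZMod d × ZMod d × ZMod d × ZMod d,
        PsiA d a x * (starRingEnd ℂ) (PsiA d a x)
        = ∑ i : ZMod d, ∑ j : ZMod d, ∑ k : ZMod d, ∑ l : ZMod d,
            PsiA d a (i, j, k, l) * (starRingEnd ℂ) (PsiA d a (i, j, k, l)) := by
      rw [Fintype.sum_prod_type]
      refine Finset.sum_congr rfl fun i _ => ?_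
      rw [Fintype.sum_prod_type]
      refine Finset.sum_congr rfl fun j _ => ?_
      rw [Fintype.sum_prod_type]
    rw [split]
    have hl : ∀ i j k : ZMod d,
        (∑ l : ZMod d, PsiA d a (i, j, k, l) * (starRingEnd ℂ) (PsiA d a (i, j, k, l)))
          = (d : ℂ)⁻¹ * Pa d a (i, j, k) (i, j, k) := by
      intro i j k
      rw [← pt d a i j k i j k, ← mul_assoc, inv_mul_cancel₀ hd, one_mul]
    rw [Finset.sum_congr rfl fun i _ => Finset.sum_congr rfl fun j _ =>
      Finset.sum_congr rfl fun k _ => hl i j k]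
    simp only [← Finset.mul_sum]
    rw [hPa, inv_mul_cancel₀ hd]
  -- convert to the real statement
  have : ((∑ x : ZMod d × ZMod d × ZMod d × ZMod d, ‖PsiA d a x‖ ^ 2 : ℝ) : ℂ)
      = ((1 : ℝ) : ℂ) := by
    rw [Complex.ofReal_sum, Complex.ofReal_one, ← hsum]
    refine Finset.sum_congr rfl fun x _ => ?_
    rw [Complex.mul_conj, Complex.sq_norm]
  exact_mod_cast this
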